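/- arXiv:1910.03865 — 4 statements merged into one kernel-verified Lean document; each statement's English description precedes it below -/
import Mathlib

section
/- Let M ≥ 1 and L ≥ 1 be integers. Let h = (h_1, …, h_M) and ĥ = (ĥ_1, …, ĥ_M) be random unit vectors in ℝ^M with nonnegative entries, and let s_1, …, s_M and ŝ_1, …, ŝ_M be random unit vectors in ℝ^L, all on a common probability space. Assume the pair (h, ĥ) is independent of the family (s_1, ŝ_1, …, s_M, ŝ_M), and that E[⟨s_i, ŝ_i⟩] has the same value for every i, equal to 1 − D_s/2 where D_s := E[‖s_1 − ŝ_1‖²]. Let f ∈ ℝ^(M·L) be the concatenation of the blocks h_i·s_i and f̂ the concatenation of the blocks ĥ_i·ŝ_i, and set D_h := E[‖h − ĥ‖²]. Then E[‖f − f̂‖²] = D_s + D_h − (1/2)·D_s·D_h. -/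
open MeasureTheory ProbabilityTheory
open scoped RealInnerProductSpace

private lemma euclid_norm_sq {ι : Type*} [Fintype ι] (x : EuclideanSpace ℝ ι) :
    ‖x‖ ^ 2 = ∑ i, x i ^ 2 := by
  rw [EuclideanSpace.norm_eq, Real.sq_sqrt (by positivity)]
  simp [sq_abs]

private lemma euclid_abs_apply_le {n : ℕ} (x : EuclideanSpace ℝ (Fin n)) (i : Fin n) :
    |x i| ≤ ‖x‖ := by
  rw [EuclideanSpace.norm_eq, ← Real.sqrt_sq_eq_abs]
  apply Real.sqrt_le_sqrt
  calc x i ^ 2 = ‖x i‖ ^ 2 := by rw [Real.norm_eq_abs, sq_abs]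
    _ ≤ ∑ j, ‖x j‖ ^ 2 :=
      Finset.single_le_sum (f := fun j => ‖x j‖ ^ 2) (fun j _ => by positivity)
        (Finset.mem_univ i)

/-- Distortion decomposition for the hierarchical (block + hinge) quantizer: if the pair of
hinge vectors `(h, ĥ)` (unit vectors in `ℝ^M` with nonnegative entries) is independent of
the family of normalized blocks `(s_i, ŝ_i)` (unit vectors in `ℝ^L`), `E[⟨s_i, ŝ_i⟩]` has
the same value `1 − D_s/2` for every `i` where `D_s = E[‖s_1 − ŝ_1‖²]`, and `f`, `f̂` are the
concatenations of the blocks `h_i·s_i` and `ĥ_i·ŝ_i` respectively, then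
`E[‖f − f̂‖²] = D_s + D_h − (1/2)·D_s·D_h` where `D_h = E[‖h − ĥ‖²]`. -/
theorem hierarchical_quantizer_distortion
    {Ω : Type*} [MeasureSpace Ω] [IsProbabilityMeasure (ℙ : Measure Ω)]
    (M L : ℕ) (hM : 1 ≤ M) (hL : 1 ≤ L)
    (h hq : Ω → EuclideanSpace ℝ (Fin M))
    (s sq : Fin M → Ω → EuclideanSpace ℝ (Fin L))
    (hhm : Measurable h) (hhqm : Measurable hq)
    (hsm : ∀ i, Measurable (s i)) (hsqm : ∀ i, Measurable (sq i))
    (hhu : ∀ ω, ‖h ω‖ = 1) (hhqu : ∀ ω, ‖hq ω‖ = 1)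
    (hhn : ∀ ω i, 0 ≤ h ω i) (hhqn : ∀ ω i, 0 ≤ hq ω i)
    (hsu : ∀ i ω, ‖s i ω‖ = 1) (hsqu : ∀ i ω, ‖sq i ω‖ = 1)
    (hind : IndepFun (fun ω => (h ω, hq ω)) (fun ω (i : Fin M) => (s i ω, sq i ω)) ℙ)
    (Ds Dh : ℝ)
    (hDs : Ds = ∫ ω, ‖s ⟨0, hM⟩ ω - sq ⟨0, hM⟩ ω‖ ^ 2)
    (hDsAll : ∀ i : Fin M, ∫ ω, ⟪s i ω, sq i ω⟫ = 1 - Ds / 2)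
    (hDh : Dh = ∫ ω, ‖h ω - hq ω‖ ^ 2)
    (f fq : Ω → EuclideanSpace ℝ (Fin M × Fin L))
    (hf : ∀ ω p, f ω p = h ω p.1 * s p.1 ω p.2)
    (hfq : ∀ ω p, fq ω p = hq ω p.1 * sq p.1 ω p.2) :
    ∫ ω, ‖f ω - fq ω‖ ^ 2 = Ds + Dh - (1 / 2) * Ds * Dh := by
  -- notation
  set A : Fin M → Ω → ℝ := fun i ω => h ω i * hq ω i with hA
  set B : Fin M → Ω → ℝ := fun i ω => ⟪s i ω, sq i ω⟫ with hB
  -- measurability of components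
  have hAm : ∀ i, Measurable (A i) := fun i =>
    (show Measurable fun ω => h ω i from
      (measurable_pi_apply i).comp (Measurable.comp (WithLp.measurable_ofLp 2 _) hhm)).mul
      (show Measurable fun ω => hq ω i from
      (measurable_pi_apply i).comp (Measurable.comp (WithLp.measurable_ofLp 2 _) hhqm))
  have hBm : ∀ i, Measurable (B i) := fun i => (hsm i).inner (hsqm i)
  -- bounds
  have hAb : ∀ i ω, |A i ω| ≤ 1 := by
    intro i ω
    rw [hA, abs_mul]
    calc |h ω i| * |hq ω i| ≤ ‖h ω‖ * ‖hq ω‖ :=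
        mul_le_mul (euclid_abs_apply_le _ i) (euclid_abs_apply_le _ i) (abs_nonneg _)
          (norm_nonneg _)
      _ = 1 := by rw [hhu, hhqu]; ring
  have hBb : ∀ i ω, |B i ω| ≤ 1 := by
    intro i ω
    calc |B i ω| ≤ ‖s i ω‖ * ‖sq i ω‖ := abs_real_inner_le_norm _ _
      _ = 1 := by rw [hsu, hsqu]; ring
  -- integrability
  have hAint : ∀ i, Integrable (A i) := fun i =>
    (integrable_const (1 : ℝ)).mono' (hAm i).aestronglyMeasurable
      (Filter.Eventually.of_forall fun ω => by simpa using hAb i ω)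
  have hABint : ∀ i, Integrable (fun ω => A i ω * B i ω) := fun i =>
    (integrable_const (1 : ℝ)).mono' ((hAm i).mul (hBm i)).aestronglyMeasurable
      (Filter.Eventually.of_forall fun ω => by
        rw [Real.norm_eq_abs, abs_mul]
        calc |A i ω| * |B i ω| ≤ 1 * 1 :=
            mul_le_mul (hAb i ω) (hBb i ω) (abs_nonneg _) zero_le_one
          _ = 1 := one_mul 1)
  -- independence factorization for each i
  have hfact : ∀ i, ∫ ω, A i ω * B i ω = (∫ ω, A i ω) * ∫ ω, B i ω := by
    intro i
    have hφ : Measurable fun p : EuclideanSpace ℝ (Fin M) × EuclideanSpace ℝ (Fin M) =>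
        p.1 i * p.2 i :=
      (show Measurable fun p : EuclideanSpace ℝ (Fin M) × EuclideanSpace ℝ (Fin M) => p.1 i from
        (measurable_pi_apply i).comp (Measurable.comp (WithLp.measurable_ofLp 2 _) measurable_fst)).mul
        (show Measurable fun p : EuclideanSpace ℝ (Fin M) × EuclideanSpace ℝ (Fin M) => p.2 i from
        (measurable_pi_apply i).comp (Measurable.comp (WithLp.measurable_ofLp 2 _) measurable_snd))
    have hψ : Measurable fun v : Fin M → EuclideanSpace ℝ (Fin L) × EuclideanSpace ℝ (Fin L) =>
        ⟪(v i).1, (v i).2⟫ :=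
      ((measurable_pi_apply i).fst).inner ((measurable_pi_apply i).snd)
    have hi : IndepFun (A i) (B i) ℙ := hind.comp hφ hψ
    exact hi.integral_mul_eq_mul_integral (hAm i).aestronglyMeasurable (hBm i).aestronglyMeasurable
  -- pointwise expansion of the distortion
  have key : ∀ ω, ‖f ω - fq ω‖ ^ 2 = 2 - 2 * ∑ i, A i ω * B i ω := by
    intro ω
    have expand : ∀ (a b : ℝ) (x y : Fin L → ℝ),
        ∑ j, (a * x j - b * y j) ^ 2 =
          a ^ 2 * (∑ j, x j ^ 2) + b ^ 2 * (∑ j, y j ^ 2) - 2 * a * b * ∑ j, x j * y j := by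
      intro a b x y
      rw [Finset.mul_sum, Finset.mul_sum, Finset.mul_sum, ← Finset.sum_add_distrib,
        ← Finset.sum_sub_distrib]
      exact Finset.sum_congr rfl fun j _ => by ring
    calc ‖f ω - fq ω‖ ^ 2 = ∑ p : Fin M × Fin L, (f ω p - fq ω p) ^ 2 := by
          rw [euclid_norm_sq]; simp
      _ = ∑ i, ∑ j, (h ω i * s i ω j - hq ω i * sq i ω j) ^ 2 := by
          rw [Fintype.sum_prod_type]
          exact Finset.sum_congr rfl fun i _ => Finset.sum_congr rfl fun j _ => by
            rw [hf, hfq]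
      _ = ∑ i, (h ω i ^ 2 + hq ω i ^ 2 - 2 * (A i ω * B i ω)) := by
          refine Finset.sum_congr rfl fun i _ => ?_
          rw [expand]
          have h1 : ∑ j, s i ω j ^ 2 = 1 := by
            rw [← euclid_norm_sq, hsu]; norm_num
          have h2 : ∑ j, sq i ω j ^ 2 = 1 := by
            rw [← euclid_norm_sq, hsqu]; norm_num
          have h3 : ∑ j, s i ω j * sq i ω j = B i ω := by
            rw [hB]; simp [PiLp.inner_apply, RCLike.inner_apply, mul_comm]
          rw [h1, h2, h3, hA]; ring
      _ = 2 - 2 * ∑ i, A i ω * B i ω := by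
          rw [Finset.sum_sub_distrib, Finset.sum_add_distrib, ← euclid_norm_sq,
            ← euclid_norm_sq, hhu, hhqu, ← Finset.mul_sum]
          ring
  -- inner product of hinge vectors
  have hinner : ∀ ω, ⟪h ω, hq ω⟫ = ∑ i, A i ω := by
    intro ω; simp [hA, PiLp.inner_apply, RCLike.inner_apply, mul_comm]
  -- Dh in terms of the inner product
  have hDh' : Dh = 2 - 2 * ∑ i, ∫ ω, A i ω := by
    rw [hDh]
    have hkey2 : ∀ ω, ‖h ω - hq ω‖ ^ 2 = 2 - 2 * ∑ i, A i ω := by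
      intro ω
      rw [← hinner, @norm_sub_sq_real, hhu, hhqu]; ring
    calc ∫ ω, ‖h ω - hq ω‖ ^ 2 = ∫ ω, (2 - 2 * ∑ i, A i ω) := by
          exact integral_congr_ae (Filter.Eventually.of_forall hkey2)
      _ = 2 - 2 * ∑ i, ∫ ω, A i ω := by
          rw [integral_sub (integrable_const 2)
            ((integrable_finset_sum Finset.univ fun i _ => hAint i).const_mul 2),
            integral_const_mul _ _, integral_finset_sum _ fun i _ => hAint i]
          simp
  -- main computation
  have hmain : ∫ ω, ‖f ω - fq ω‖ ^ 2 = 2 - 2 * ∑ i, (∫ ω, A i ω) * (1 - Ds / 2) := by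
    calc ∫ ω, ‖f ω - fq ω‖ ^ 2 = ∫ ω, (2 - 2 * ∑ i, A i ω * B i ω) :=
          integral_congr_ae (Filter.Eventually.of_forall key)
      _ = 2 - 2 * ∑ i, ∫ ω, A i ω * B i ω := by
          rw [integral_sub (integrable_const 2)
            ((integrable_finset_sum Finset.univ fun i _ => hABint i).const_mul 2),
            integral_const_mul _ _, integral_finset_sum _ fun i _ => hABint i]
          simp
      _ = 2 - 2 * ∑ i, (∫ ω, A i ω) * (1 - Ds / 2) := by
          congr 1
          rw [Finset.mul_sum, Finset.mul_sum]
          refine Finset.sum_congr rfl fun i _ => ?_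
          rw [hfact i, hDsAll i]
  rw [hmain, ← Finset.sum_mul]
  have : (∑ i, ∫ ω, A i ω) = 1 - Dh / 2 := by rw [hDh']; ring_nf
  rw [this]; ring
end

section
/- Let (X, d) be a metric space, C ⊆ X, h ∈ X, and let r > 0 and α > 0. Suppose C' := C ∩ {y : d(y, h) ≤ (1+α)·r} is nonempty. Then for every x ∈ X with d(x, h) ≤ r, one has inf_{c ∈ C'} d(c, x) ≤ (1 + 2/α) · inf_{c ∈ C} d(c, x). -/
/-- If `C' = C ∩ closedBall h ((1+α)·r)` is nonempty, then for every `x` with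
`d(x, h) ≤ r`, the infimum distance from `x` to `C'` is at most `(1 + 2/α)` times the
infimum distance from `x` to `C`. -/
theorem infDist_inter_ball_le
    {X : Type*} [MetricSpace X] (C : Set X) (h : X) (r α : ℝ)
    (hr : 0 < r) (hα : 0 < α)
    (hne : (C ∩ Metric.closedBall h ((1 + α) * r)).Nonempty) :
    ∀ x : X, dist x h ≤ r →
      Metric.infDist x (C ∩ Metric.closedBall h ((1 + α) * r)) ≤
        (1 + 2 / α) * Metric.infDist x C := by
  intro x hx
  obtain ⟨c₀, hc₀C, hc₀B⟩ := hne
  have hCne : C.Nonempty := ⟨c₀, hc₀C⟩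
  set D := Metric.infDist x C with hD
  have hD0 : 0 ≤ D := Metric.infDist_nonneg
  have h2α : 0 < 2 / α := by positivity
  rcases lt_or_ge D (α * r) with hlt | hge
  · have key : Metric.infDist x (C ∩ Metric.closedBall h ((1 + α) * r)) ≤ D := by
      apply le_of_forall_pos_le_add
      intro ε hε
      have hδ : 0 < min ε (α * r - D) := lt_min hε (by linarith)
      obtain ⟨c, hcC, hcd⟩ := (Metric.infDist_lt_iff hCne).1
        (show Metric.infDist x C < D + min ε (α * r - D) by linarith)
      have hxc : dist x c < α * r := by
        have := min_le_right ε (α * r - D); linarith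
      have hcball : c ∈ Metric.closedBall h ((1 + α) * r) := by
        have hcx : dist c x = dist x c := dist_comm c x
        have : dist c h ≤ dist c x + dist x h := dist_triangle c x h
        simp only [Metric.mem_closedBall]
        nlinarith
      calc Metric.infDist x (C ∩ Metric.closedBall h ((1 + α) * r)) ≤ dist x c :=
            Metric.infDist_le_dist_of_mem ⟨hcC, hcball⟩
        _ ≤ D + ε := by have := min_le_left ε (α * r - D); linarith
    calc Metric.infDist x (C ∩ Metric.closedBall h ((1 + α) * r)) ≤ D := key
      _ ≤ (1 + 2 / α) * D := by nlinarith
  · have h1 : Metric.infDist x (C ∩ Metric.closedBall h ((1 + α) * r)) ≤ dist x c₀ :=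
      Metric.infDist_le_dist_of_mem ⟨hc₀C, hc₀B⟩
    have hb := Metric.mem_closedBall.1 hc₀B
    have h2 : dist x c₀ ≤ (2 + α) * r := by
      have hcx : dist h c₀ = dist c₀ h := dist_comm h c₀
      have := dist_triangle x h c₀
      nlinarith
    have h3 : (2 + α) * r ≤ (1 + 2 / α) * D := by
      have heq : (1 + 2 / α) * (α * r) = (2 + α) * r := by field_simp; ring
      nlinarith [mul_le_mul_of_nonneg_left hge (by positivity : (0:ℝ) ≤ 1 + 2 / α)]
    linarith
end

section
/- Let a, b > 0. Let X and Y be independent real random variables such that X has the Gamma distribution with shape a/2 and rate 1/2 (i.e., X is chi-squared with a degrees of freedom) and Y has the Gamma distribution with shape b/2 and rate 1/2. Then X/(X+Y) has the Beta(a/2, b/2) distribution, i.e., its law has density t ↦ t^{a/2 − 1}·(1 − t)^{b/2 − 1} / B(a/2, b/2) on (0,1) with respect to Lebesgue measure, where B(p, q) = Γ(p)·Γ(q)/Γ(p+q). -/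
open MeasureTheory ProbabilityTheory

/-- The Beta distribution `Beta(p, q)` on `ℝ`, given by the density
`t ↦ t^(p−1)·(1−t)^(q−1) / B(p,q)` on `(0,1)` with respect to Lebesgue measure,
where `B(p,q) = Γ(p)·Γ(q)/Γ(p+q)`. -/
noncomputable def betaMeasure (p q : ℝ) : Measure ℝ :=
  volume.withDensity fun t =>
    ENNReal.ofReal (Set.indicator (Set.Ioo (0 : ℝ) 1)
      (fun t => t ^ (p - 1) * (1 - t) ^ (q - 1) /
        (Real.Gamma p * Real.Gamma q / Real.Gamma (p + q))) t)

namespace GammaRatioBeta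

open Real Set

/-- The transformation `(t, v) ↦ (t v, (1 - t) v)`. -/
noncomputable def phi : ℝ × ℝ → ℝ × ℝ := fun z => (z.1 * z.2, (1 - z.1) * z.2)

/-- Its derivative. -/
noncomputable def phi' (z : ℝ × ℝ) : ℝ × ℝ →L[ℝ] ℝ × ℝ :=
  LinearMap.toContinuousLinearMap (Matrix.toLin (Module.Basis.finTwoProd ℝ) (Module.Basis.finTwoProd ℝ)
    !![z.2, z.1; -z.2, 1 - z.1])

lemma hasFDerivAt_phi (z : ℝ × ℝ) : HasFDerivAt phi (phi' z) z := by
  unfold phi phi'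
  rw [Matrix.toLin_finTwoProd_toContinuousLinearMap]
  have h1 : HasFDerivAt (fun z : ℝ × ℝ => z.1 * z.2)
      (z.1 • ContinuousLinearMap.snd ℝ ℝ ℝ + z.2 • ContinuousLinearMap.fst ℝ ℝ ℝ) z :=
    hasFDerivAt_fst.mul hasFDerivAt_snd
  have h2 : HasFDerivAt (fun z : ℝ × ℝ => (1 - z.1) * z.2)
      ((1 - z.1) • ContinuousLinearMap.snd ℝ ℝ ℝ +
        z.2 • (0 - ContinuousLinearMap.fst ℝ ℝ ℝ)) z :=
    ((hasFDerivAt_const (1 : ℝ) z).sub hasFDerivAt_fst).mul hasFDerivAt_snd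
  refine (h1.prodMk h2).congr_fderiv ?_
  ext <;> simp

lemma phi'_det (z : ℝ × ℝ) : (phi' z).det = z.2 := by
  simp only [phi', LinearMap.det_toContinuousLinearMap, LinearMap.det_toLin,
    Matrix.det_fin_two_of]
  ring

lemma injOn_phi : InjOn phi (Ioo (0 : ℝ) 1 ×ˢ Ioi (0 : ℝ)) := by
  rintro ⟨t, v⟩ ⟨ht, hv⟩ ⟨t', v'⟩ ⟨ht', hv'⟩ h
  simp only [phi, Prod.mk.injEq] at h
  have hvv : v = v' := by nlinarith [h.1, h.2]
  subst hvv
  have htt : t = t' := mul_right_cancel₀ (ne_of_gt hv) h.1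
  simp [htt]

lemma image_phi (s : Set ℝ) :
    phi '' ((Ioo (0 : ℝ) 1 ∩ s) ×ˢ Ioi (0 : ℝ)) =
      ((fun z : ℝ × ℝ => z.1 / (z.1 + z.2)) ⁻¹' s) ∩ Ioi (0 : ℝ) ×ˢ Ioi (0 : ℝ) := by
  ext z
  constructor
  · rintro ⟨⟨t, v⟩, ⟨⟨ht, hts⟩, hv⟩, rfl⟩
    simp only [phi, mem_inter_iff, mem_preimage, mem_prod, mem_Ioi]
    have hv0 : (0 : ℝ) < v := hv
    have h1 : t * v + (1 - t) * v = v := by ring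
    constructor
    · have : t * v / (t * v + (1 - t) * v) = t := by
        rw [h1]; field_simp
      simpa [this] using hts
    · exact ⟨mul_pos ht.1 hv0, mul_pos (by linarith [ht.2]) hv0⟩
  · intro hz
    obtain ⟨x, y⟩ := z
    obtain ⟨hs, hx, hy⟩ := hz
    simp only [mem_Ioi] at hx hy
    refine ⟨(x / (x + y), x + y), ⟨⟨?_, ?_⟩, ?_⟩, ?_⟩
    · constructor
      · positivity
      · rw [div_lt_one (by linarith)]; linarith
    · exact hs
    · simp only [mem_Ioi]; linarith
    · simp only [phi]
      have hxy : x + y ≠ 0 := by positivity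
      simp only [Prod.mk.injEq]
      constructor
      · field_simp
      · field_simp; ring

lemma lintegral_rpow_mul_exp {s r : ℝ} (hs : 0 < s) (hr : 0 < r) :
    ∫⁻ v in Ioi (0 : ℝ), ENNReal.ofReal (v ^ (s - 1) * exp (-(r * v))) =
      ENNReal.ofReal ((1 / r) ^ s * Gamma s) := by
  rw [← integral_rpow_mul_exp_neg_mul_Ioi hs hr,
    ← ofReal_integral_eq_lintegral_ofReal]
  · have : IntegrableOn (fun v : ℝ => v ^ (s - 1) * exp (-r * v ^ (1 : ℝ))) (Ioi 0) :=
      integrableOn_rpow_mul_exp_neg_mul_rpow (by linarith) zero_lt_one hr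
    refine this.congr_fun (fun v hv => ?_) measurableSet_Ioi
    simp only [Real.rpow_one]; ring_nf
  · filter_upwards [ae_restrict_mem measurableSet_Ioi] with v hv
    have : (0 : ℝ) < v := hv
    positivity

lemma real_calc {p q r : ℝ} (hp : 0 < p) (hq : 0 < q) (hr : 0 < r) {t v : ℝ}
    (ht : t ∈ Ioo (0 : ℝ) 1) (hv : 0 < v) :
    v * (gammaPDFReal p r (t * v) * gammaPDFReal q r ((1 - t) * v)) =
      (r ^ (p + q) / (Gamma p * Gamma q) * (t ^ (p - 1) * (1 - t) ^ (q - 1))) *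
        (v ^ (p + q - 1) * exp (-(r * v))) := by
  have ht0 : 0 < t := ht.1
  have ht1 : 0 < 1 - t := by linarith [ht.2]
  rw [gammaPDFReal, if_pos (by positivity), gammaPDFReal, if_pos (by positivity)]
  rw [Real.mul_rpow ht0.le hv.le, Real.mul_rpow ht1.le hv.le]
  rw [show v ^ (p + q - 1) = v ^ (p - 1) * v ^ (q - 1) * v by
    rw [← Real.rpow_add hv, ← Real.rpow_add_one hv.ne']; ring_nf]
  rw [show Real.exp (-(r * v)) = exp (-(r * (t * v))) * exp (-(r * ((1 - t) * v))) by
    rw [← Real.exp_add]; ring_nf]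
  rw [show r ^ (p + q) = r ^ p * r ^ q by rw [← Real.rpow_add hr]]
  ring

end GammaRatioBeta

open GammaRatioBeta Real Set in
lemma map_ratio_gamma_prod {p q r : ℝ} (hp : 0 < p) (hq : 0 < q) (hr : 0 < r) :
    Measure.map (fun z : ℝ × ℝ => z.1 / (z.1 + z.2))
      ((gammaMeasure p r).prod (gammaMeasure q r)) = _root_.betaMeasure p q := by
  have hΓp := Real.Gamma_pos_of_pos hp
  have hΓq := Real.Gamma_pos_of_pos hq
  have hΓpq := Real.Gamma_pos_of_pos (add_pos hp hq)
  haveI := ProbabilityTheory.isProbabilityMeasure_gammaMeasure hp hr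
  haveI := ProbabilityTheory.isProbabilityMeasure_gammaMeasure hq hr
  have hg : Measurable (fun z : ℝ × ℝ => z.1 / (z.1 + z.2)) :=
    measurable_fst.div (measurable_fst.add measurable_snd)
  set F : ℝ × ℝ → ENNReal := fun z =>
    ProbabilityTheory.gammaPDF p r z.1 * ProbabilityTheory.gammaPDF q r z.2 with hFdef
  have hpdfm : ∀ (c : ℝ), Measurable (ProbabilityTheory.gammaPDF c r) := fun c =>
    (ProbabilityTheory.measurable_gammaPDFReal c r).ennreal_ofReal
  have hFm : Measurable F := ((hpdfm p).comp measurable_fst).mul ((hpdfm q).comp measurable_snd)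
  -- the joint law as a density w.r.t. 2-dimensional Lebesgue measure
  have hprod : (gammaMeasure p r).prod (gammaMeasure q r) =
      (volume : Measure (ℝ × ℝ)).withDensity F := by
    rw [Measure.volume_eq_prod]
    refine Measure.prod_eq fun s t hs ht => ?_
    rw [withDensity_apply _ (hs.prod ht), ← Measure.prod_restrict,
      lintegral_prod_mul (hpdfm p).aemeasurable (hpdfm q).aemeasurable,
      gammaMeasure, gammaMeasure, withDensity_apply _ hs, withDensity_apply _ ht]
  have hT : MeasurableSet (Ioi (0 : ℝ) ×ˢ Ioi (0 : ℝ)) :=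
    measurableSet_Ioi.prod measurableSet_Ioi
  -- the density vanishes a.e. outside the open first quadrant
  have hae : F =ᵐ[(volume : Measure (ℝ × ℝ))] (Ioi (0 : ℝ) ×ˢ Ioi (0 : ℝ)).indicator F := by
    have hN : (volume : Measure (ℝ × ℝ))
        ({z : ℝ × ℝ | z.1 = 0} ∪ {z : ℝ × ℝ | z.2 = 0}) = 0 := by
      rw [Measure.volume_eq_prod]
      apply measure_union_null
      · have h1 : {z : ℝ × ℝ | z.1 = 0} = ({0} : Set ℝ) ×ˢ (univ : Set ℝ) := by
          ext z
          constructor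
          · intro h; exact ⟨mem_singleton_iff.mpr h, mem_univ _⟩
          · rintro ⟨h, -⟩; exact h
        rw [h1, Measure.prod_prod]; simp
      · have h2 : {z : ℝ × ℝ | z.2 = 0} = (univ : Set ℝ) ×ˢ ({0} : Set ℝ) := by
          ext z
          constructor
          · intro h; exact ⟨mem_univ _, mem_singleton_iff.mpr h⟩
          · rintro ⟨-, h⟩; exact h
        rw [h2, Measure.prod_prod]; simp
    filter_upwards [measure_eq_zero_iff_ae_notMem.mp hN] with z hz
    by_cases hzT : z ∈ Ioi (0 : ℝ) ×ˢ Ioi (0 : ℝ)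
    · rw [indicator_of_mem hzT]
    · rw [indicator_of_notMem hzT]
      simp only [mem_union, mem_setOf_eq, not_or] at hz
      simp only [mem_prod, mem_Ioi, not_and_or, not_lt] at hzT
      have : z.1 < 0 ∨ z.2 < 0 := by
        rcases hzT with h | h
        · exact Or.inl (lt_of_le_of_ne h hz.1)
        · exact Or.inr (lt_of_le_of_ne h hz.2)
      rcases this with h | h
      · simp [hFdef, ProbabilityTheory.gammaPDF_of_neg h]
      · simp [hFdef, ProbabilityTheory.gammaPDF_of_neg h]
  have key : ∀ A : Set (ℝ × ℝ), MeasurableSet A →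
      ∫⁻ z in A, F z = ∫⁻ z in A ∩ Ioi (0 : ℝ) ×ˢ Ioi (0 : ℝ), F z := by
    intro A hA
    calc ∫⁻ z in A, F z = ∫⁻ z in A, (Ioi (0 : ℝ) ×ˢ Ioi (0 : ℝ)).indicator F z :=
          lintegral_congr_ae (ae_restrict_of_ae hae)
      _ = ∫⁻ z in Ioi (0 : ℝ) ×ˢ Ioi (0 : ℝ), F z ∂(volume.restrict A) :=
          lintegral_indicator hT F
      _ = ∫⁻ z in A ∩ Ioi (0 : ℝ) ×ˢ Ioi (0 : ℝ), F z := by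
          rw [Measure.restrict_restrict hT, inter_comm]
  refine Measure.ext fun s hs => ?_
  rw [Measure.map_apply hg hs, hprod, withDensity_apply _ (hg hs), key _ (hg hs),
    ← image_phi s]
  have hS' : MeasurableSet ((Ioo (0 : ℝ) 1 ∩ s) ×ˢ Ioi (0 : ℝ)) :=
    (measurableSet_Ioo.inter hs).prod measurableSet_Ioi
  rw [lintegral_image_eq_lintegral_abs_det_fderiv_mul volume hS'
    (fun z _ => (hasFDerivAt_phi z).hasFDerivWithinAt)
    (injOn_phi.mono (prod_mono_left inter_subset_left)) F]
  -- rewrite the integrand on the set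
  have hcongr : ∫⁻ z in (Ioo (0 : ℝ) 1 ∩ s) ×ˢ Ioi (0 : ℝ),
        ENNReal.ofReal |(phi' z).det| * F (phi z) =
      ∫⁻ z in (Ioo (0 : ℝ) 1 ∩ s) ×ˢ Ioi (0 : ℝ),
        ENNReal.ofReal (r ^ (p + q) / (Gamma p * Gamma q) *
            (z.1 ^ (p - 1) * (1 - z.1) ^ (q - 1))) *
          ENNReal.ofReal (z.2 ^ (p + q - 1) * exp (-(r * z.2))) := by
    refine setLIntegral_congr_fun hS' ?_
    rintro ⟨t, v⟩ ⟨⟨ht, hts⟩, hv⟩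
    have hv' : (0 : ℝ) < v := hv
    have h1t : (0 : ℝ) < 1 - t := by linarith [ht.2]
    have hCnn : 0 ≤ r ^ (p + q) / (Gamma p * Gamma q) * (t ^ (p - 1) * (1 - t) ^ (q - 1)) := by
      have := ht.1
      positivity
    beta_reduce
    rw [phi'_det, abs_of_pos hv']
    show ENNReal.ofReal v * (ProbabilityTheory.gammaPDF p r (t * v) *
        ProbabilityTheory.gammaPDF q r ((1 - t) * v)) = _
    have h1 : ProbabilityTheory.gammaPDF p r (t * v)
        = ENNReal.ofReal (ProbabilityTheory.gammaPDFReal p r (t * v)) := rfl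
    have h2 : ProbabilityTheory.gammaPDF q r ((1 - t) * v)
        = ENNReal.ofReal (ProbabilityTheory.gammaPDFReal q r ((1 - t) * v)) := rfl
    rw [h1, h2, ← ENNReal.ofReal_mul (ProbabilityTheory.gammaPDFReal_nonneg hp hr _),
      ← ENNReal.ofReal_mul hv'.le, real_calc hp hq hr ht hv',
      ENNReal.ofReal_mul hCnn]
  rw [hcongr]
  have hCm : Measurable fun t : ℝ => ENNReal.ofReal
      (r ^ (p + q) / (Gamma p * Gamma q) * (t ^ (p - 1) * (1 - t) ^ (q - 1))) :=
    (measurable_const.mul ((measurable_id'.pow_const _).mul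
      ((measurable_const.sub measurable_id').pow_const _))).ennreal_ofReal
  have hkm : Measurable fun v : ℝ => ENNReal.ofReal (v ^ (p + q - 1) * exp (-(r * v))) :=
    ((measurable_id'.pow_const _).mul
      ((measurable_id'.const_mul r).neg.exp)).ennreal_ofReal
  rw [Measure.volume_eq_prod, ← Measure.prod_restrict,
    lintegral_prod_mul hCm.aemeasurable hkm.aemeasurable,
    lintegral_rpow_mul_exp (add_pos hp hq) hr, ← lintegral_mul_const _ hCm]
  -- right-hand side
  rw [_root_.betaMeasure, withDensity_apply _ hs]
  have hind : (fun t : ℝ => ENNReal.ofReal ((Ioo (0 : ℝ) 1).indicator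
        (fun t => t ^ (p - 1) * (1 - t) ^ (q - 1) /
          (Gamma p * Gamma q / Gamma (p + q))) t)) =
      (Ioo (0 : ℝ) 1).indicator (fun t => ENNReal.ofReal (t ^ (p - 1) * (1 - t) ^ (q - 1) /
        (Gamma p * Gamma q / Gamma (p + q)))) := by
    ext t
    by_cases h : t ∈ Ioo (0 : ℝ) 1 <;> simp [h]
  rw [hind, lintegral_indicator measurableSet_Ioo,
    Measure.restrict_restrict measurableSet_Ioo]
  refine setLIntegral_congr_fun (measurableSet_Ioo.inter hs)
    ?_
  rintro t ⟨ht, hts⟩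
  have h1t : (0 : ℝ) < 1 - t := by linarith [ht.2]
  have ht0 := ht.1
  have hCnn : 0 ≤ r ^ (p + q) / (Gamma p * Gamma q) * (t ^ (p - 1) * (1 - t) ^ (q - 1)) := by
    positivity
  beta_reduce
  rw [← ENNReal.ofReal_mul hCnn]
  congr 1
  have hrpq : r ^ (p + q) * (1 / r) ^ (p + q) = 1 := by
    rw [← Real.mul_rpow hr.le (by positivity), mul_one_div, div_self hr.ne', Real.one_rpow]
  have expand : r ^ (p + q) / (Gamma p * Gamma q) * (t ^ (p - 1) * (1 - t) ^ (q - 1)) *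
      ((1 / r) ^ (p + q) * Gamma (p + q)) =
      (r ^ (p + q) * (1 / r) ^ (p + q)) *
        (t ^ (p - 1) * (1 - t) ^ (q - 1) * Gamma (p + q) / (Gamma p * Gamma q)) := by
    ring
  rw [expand, hrpq, one_mul]
  rw [div_div_eq_mul_div]

/-- If `X ~ χ²(a) = Gamma(a/2, rate 1/2)` and `Y ~ χ²(b) = Gamma(b/2, rate 1/2)` are
independent, then `X/(X+Y)` has the `Beta(a/2, b/2)` distribution. -/
theorem gamma_ratio_beta
    {Ω : Type*} [MeasureSpace Ω] [IsProbabilityMeasure (ℙ : Measure Ω)]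
    (a b : ℝ) (ha : 0 < a) (hb : 0 < b)
    (X Y : Ω → ℝ)
    (hXY : IndepFun X Y ℙ)
    (hX : Measure.map X ℙ = gammaMeasure (a / 2) (1 / 2))
    (hY : Measure.map Y ℙ = gammaMeasure (b / 2) (1 / 2)) :
    Measure.map (fun ω => X ω / (X ω + Y ω)) ℙ = _root_.betaMeasure (a / 2) (b / 2) := by
  have ha2 : 0 < a / 2 := by linarith
  have hb2 : 0 < b / 2 := by linarith
  have hr2 : 0 < (1 / 2 : ℝ) := by norm_num
  have hXm : AEMeasurable X ℙ := by
    by_contra h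
    rw [Measure.map_of_not_aemeasurable h] at hX
    have hP := ProbabilityTheory.isProbabilityMeasure_gammaMeasure ha2 hr2
    exact IsProbabilityMeasure.ne_zero _ hX.symm
  have hYm : AEMeasurable Y ℙ := by
    by_contra h
    rw [Measure.map_of_not_aemeasurable h] at hY
    have hP := ProbabilityTheory.isProbabilityMeasure_gammaMeasure hb2 hr2
    exact IsProbabilityMeasure.ne_zero _ hY.symm
  rw [ProbabilityTheory.indepFun_iff_map_prod_eq_prod_map_map hXm hYm] at hXY
  have hg : Measurable (fun z : ℝ × ℝ => z.1 / (z.1 + z.2)) :=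
    measurable_fst.div (measurable_fst.add measurable_snd)
  have hcomp : Measure.map (fun ω => X ω / (X ω + Y ω)) ℙ =
      Measure.map (fun z : ℝ × ℝ => z.1 / (z.1 + z.2))
        (Measure.map (fun ω => (X ω, Y ω)) ℙ) := by
    rw [AEMeasurable.map_map_of_aemeasurable hg.aemeasurable (hXm.prodMk hYm)]
    rfl
  rw [hcomp, hXY, hX, hY, map_ratio_gamma_prod ha2 hb2 hr2]
end

section
/- For every real ε with 0 ≤ ε ≤ 1, (1/2)·ln(1+ε) − (1+ε)/2 + 1/2 ≤ ((ln 2 − 1)/2)·ε². -/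
lemma aux_hd1 (y : ℝ) (h1y : (0:ℝ) < 1 + y) :
    HasDerivAt (fun y : ℝ => y - y^2/2 + y^3/3 - y^4/4 + y^5/5 - Real.log (1+y))
      (1 - y + y^2 - y^3 + y^4 - 1/(1+y)) y := by
  have hlog : HasDerivAt (fun y : ℝ => Real.log (1+y)) (1/(1+y)) y := by
    have := (Real.hasDerivAt_log h1y.ne').comp y ((hasDerivAt_id y).const_add 1)
    simp at this ⊢; exact this
  have hpoly : HasDerivAt (fun y : ℝ => y - y^2/2 + y^3/3 - y^4/4 + y^5/5)
      (1 - y + y^2 - y^3 + y^4) y := by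
    have := (((((hasDerivAt_id y).sub ((hasDerivAt_pow 2 y).div_const 2)).add
      ((hasDerivAt_pow 3 y).div_const 3)).sub
      ((hasDerivAt_pow 4 y).div_const 4)).add
      ((hasDerivAt_pow 5 y).div_const 5))
    exact this.congr_deriv (by push_cast; ring)
  exact hpoly.sub hlog

lemma aux_log_poly5 (x : ℝ) (hx : 0 ≤ x) :
    Real.log (1 + x) ≤ x - x^2/2 + x^3/3 - x^4/4 + x^5/5 := by
  have hmono : MonotoneOn
      (fun y : ℝ => y - y^2/2 + y^3/3 - y^4/4 + y^5/5 - Real.log (1+y))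
      (Set.Ici 0) := by
    apply monotoneOn_of_deriv_nonneg (convex_Ici 0)
    · apply ContinuousOn.sub (by fun_prop)
      apply ContinuousOn.log (by fun_prop)
      intro y hy
      have : (0:ℝ) ≤ y := hy
      linarith
    · intro y hy
      rw [interior_Ici] at hy
      have hy0 : (0:ℝ) < y := hy
      exact (aux_hd1 y (by linarith)).differentiableAt.differentiableWithinAt
    · intro y hy
      rw [interior_Ici] at hy
      have hy0 : (0:ℝ) < y := hy
      have h1y : (0:ℝ) < 1 + y := by linarith
      rw [(aux_hd1 y h1y).deriv]
      have key : 1 - y + y^2 - y^3 + y^4 - 1/(1+y) = y^5/(1+y) := by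
        field_simp; ring
      rw [key]
      positivity
  have h := hmono (Set.self_mem_Ici) (Set.mem_Ici.mpr hx) hx
  simp at h
  linarith

lemma aux_hd2 (v : ℝ) (h1v : (0:ℝ) < 1 - v) :
    HasDerivAt (fun v : ℝ => -v - v^2/2 - v^3/3 - Real.log (1-v))
      (-1 - v - v^2 - (-1)/(1-v)) v := by
  have hlog : HasDerivAt (fun v : ℝ => Real.log (1-v)) ((-1)/(1-v)) v := by
    have := (Real.hasDerivAt_log h1v.ne').comp v ((hasDerivAt_id v).const_sub 1)
    simp [div_eq_mul_inv] at this ⊢; exact this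
  have hpoly : HasDerivAt (fun v : ℝ => -v - v^2/2 - v^3/3)
      (-1 - v - v^2) v := by
    have := (((hasDerivAt_id v).neg.sub ((hasDerivAt_pow 2 v).div_const 2)).sub
      ((hasDerivAt_pow 3 v).div_const 3))
    exact this.congr_deriv (by push_cast; ring)
  exact hpoly.sub hlog

lemma aux_log_one_sub (u : ℝ) (hu : 0 ≤ u) (hu2 : u ≤ 1/2) :
    Real.log (1 - u) ≤ -u - u^2/2 - u^3/3 := by
  have hmono : MonotoneOn
      (fun v : ℝ => -v - v^2/2 - v^3/3 - Real.log (1-v))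
      (Set.Icc 0 (1/2)) := by
    apply monotoneOn_of_deriv_nonneg (convex_Icc 0 (1/2))
    · apply ContinuousOn.sub (by fun_prop)
      apply ContinuousOn.log (by fun_prop)
      intro v hv
      have : v ≤ 1/2 := hv.2
      linarith
    · intro v hv
      rw [interior_Icc] at hv
      exact (aux_hd2 v (by linarith [hv.2])).differentiableAt.differentiableWithinAt
    · intro v hv
      rw [interior_Icc] at hv
      obtain ⟨hv0, hv1⟩ := hv
      have h1v : (0:ℝ) < 1 - v := by linarith
      rw [(aux_hd2 v h1v).deriv]
      have key : -1 - v - v^2 - (-1)/(1-v) = v^3/(1-v) := by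
        field_simp; ring
      rw [key]
      positivity
  have h := hmono (Set.mem_Icc.mpr ⟨le_refl 0, by norm_num⟩)
    (Set.mem_Icc.mpr ⟨hu, hu2⟩) hu
  simp at h
  linarith

/-- For every real `ε` with `0 ≤ ε ≤ 1`,
`(1/2)·ln(1+ε) − (1+ε)/2 + 1/2 ≤ ((ln 2 − 1)/2)·ε²`. -/
theorem log_ineq_eps :
    ∀ ε : ℝ, 0 ≤ ε → ε ≤ 1 →
      (1 / 2) * Real.log (1 + ε) - (1 + ε) / 2 + 1 / 2 ≤
        ((Real.log 2 - 1) / 2) * ε ^ 2 := by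
  intro ε h0 h1
  rcases le_or_gt ε (1/2) with hc | hc
  · have hL := Real.log_two_gt_d9
    have h := aux_log_poly5 ε h0
    nlinarith [sq_nonneg ε, pow_nonneg h0 3, pow_nonneg h0 2,
      mul_nonneg (pow_nonneg h0 2) (sub_nonneg.mpr hc),
      mul_nonneg (pow_nonneg h0 3) (sub_nonneg.mpr hc)]
  · have hu0 : (0:ℝ) ≤ (1 - ε)/2 := by linarith
    have hu2 : (1 - ε)/2 ≤ 1/2 := by linarith
    have hsplit : Real.log (1 + ε) = Real.log 2 + Real.log (1 - (1 - ε)/2) := by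
      rw [← Real.log_mul (by norm_num) (by linarith)]
      congr 1
      ring
    have h := aux_log_one_sub ((1 - ε)/2) hu0 hu2
    have hL := Real.log_two_lt_d9
    rw [hsplit]
    have ht : (0:ℝ) ≤ 1 - ε := by linarith
    have ht2 : (0:ℝ) ≤ 1/2 - (1 - ε) := by linarith
    nlinarith [h, hL,
      mul_nonneg ht (mul_nonneg ht2 (by linarith : (0:ℝ) ≤ 5/6 - Real.log 2)),
      mul_nonneg ht (by linarith : (0:ℝ) ≤ 103/96 - 3/2 * Real.log 2),
      mul_nonneg (mul_nonneg ht ht2) ht2]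
end
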